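/- Conversely, for Φ(n) = (1+α)_{n−1}/(n−1)! with 0 ≤ α ≤ 1, the identity n(Φ(n)−Φ(n−1))/Φ(n) = n[1 − ∑_{k=2}^n C(n−1,k−1)(−1)^k/Φ(k)] holds for all n ≥ 2 (i.e. the (α,α) composition structure has P(first part = 1) = P(last part = 1)). -/

import Mathlib

/-- Rising factorial `(z)_k = z (z+1) ⋯ (z+k-1)`. -/
noncomputable def rpoch (z : ℝ) (k : ℕ) : ℝ := ∏ i ∈ Finset.range k, (z + i)

/-- Laplace exponent of the `(α,α)` composition structure:
`Φ(n) = (1+α)_{n−1}/(n−1)!` for `n ≥ 1`, with `Φ(0) = 0`. -/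
noncomputable def PhiAA (α : ℝ) (n : ℕ) : ℝ :=
  if n = 0 then 0 else rpoch (1 + α) (n - 1) / ((n - 1).factorial : ℝ)

lemma rpoch_zero (z : ℝ) : rpoch z 0 = 1 := by simp [rpoch]

lemma rpoch_succ (z : ℝ) (k : ℕ) : rpoch z (k + 1) = rpoch z k * (z + k) := by
  simp [rpoch, Finset.prod_range_succ]

lemma rpoch_succ' (z : ℝ) (k : ℕ) : rpoch z (k + 1) = z * rpoch (z + 1) k := by
  rw [rpoch, Finset.prod_range_succ' (fun i => z + i) k]
  rw [rpoch, mul_comm]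
  congr 1
  · push_cast; ring
  · apply Finset.prod_congr rfl
    intro i _
    push_cast
    ring

lemma rpoch_pos {z : ℝ} (hz : 0 < z) (k : ℕ) : 0 < rpoch z k := by
  apply Finset.prod_pos
  intro i _
  positivity

/-- Pascal splitting of an alternating binomial sum. -/
lemma pascal_sum (f : ℕ → ℝ) (m : ℕ) :
    ∑ j ∈ Finset.range (m + 2), ((m + 1).choose j : ℝ) * (-1) ^ j * f j
      = ∑ j ∈ Finset.range (m + 1), (m.choose j : ℝ) * (-1) ^ j * f j
        - ∑ j ∈ Finset.range (m + 1), (m.choose j : ℝ) * (-1) ^ j * f (j + 1) := by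
  rw [Finset.sum_range_succ' (fun j => ((m + 1).choose j : ℝ) * (-1) ^ j * f j) (m + 1)]
  have h1 : ∀ j, ((m + 1).choose (j + 1) : ℝ) = (m.choose j : ℝ) + (m.choose (j + 1) : ℝ) := by
    intro j; rw [Nat.choose_succ_succ']; push_cast; ring
  have h2 : (∑ j ∈ Finset.range (m + 1),
      ((m + 1).choose (j + 1) : ℝ) * (-1) ^ (j + 1) * f (j + 1))
      = (∑ j ∈ Finset.range (m + 1), -((m.choose j : ℝ) * (-1) ^ j * f (j + 1)))
        + ∑ j ∈ Finset.range (m + 1), (m.choose (j + 1) : ℝ) * (-1) ^ (j + 1) * f (j + 1) := by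
    rw [← Finset.sum_add_distrib]
    apply Finset.sum_congr rfl
    intro j _
    rw [h1 j]; ring
  rw [h2]
  have h3 : (∑ j ∈ Finset.range (m + 1), (m.choose (j + 1) : ℝ) * (-1) ^ (j + 1) * f (j + 1))
      = ∑ j ∈ Finset.range (m + 1), (m.choose j : ℝ) * (-1) ^ j * f j
        - ((m.choose 0 : ℝ) * (-1) ^ 0 * f 0) := by
    have h4 : (∑ j ∈ Finset.range (m + 2), (m.choose j : ℝ) * (-1) ^ j * f j)
        = ∑ j ∈ Finset.range (m + 1), (m.choose j : ℝ) * (-1) ^ j * f j := by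
      rw [Finset.sum_range_succ]; simp [Nat.choose_eq_zero_of_lt]
    have h5 := Finset.sum_range_succ' (fun j => (m.choose j : ℝ) * (-1) ^ j * f j) (m + 1)
    rw [h4] at h5
    linarith [h5]
  rw [h3, Finset.sum_neg_distrib]
  simp only [Nat.choose_zero_right, Nat.cast_one, pow_zero, one_mul]
  ring

/-- Key identity: `∑_{j=0}^m C(m,j)(−1)^j (j+r)!/(1+α)_{j+r} = α r!/(m+α)_{r+1}` for `m ≥ 1`. -/
lemma key (α : ℝ) (h0 : 0 ≤ α) :
    ∀ m : ℕ, 1 ≤ m → ∀ r : ℕ,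
      ∑ j ∈ Finset.range (m + 1),
          (m.choose j : ℝ) * (-1) ^ j * (((j + r).factorial : ℝ) / rpoch (1 + α) (j + r))
        = α * (r.factorial : ℝ) / rpoch ((m : ℝ) + α) (r + 1) := by
  intro m hm
  induction m, hm using Nat.le_induction with
  | base =>
    intro r
    have hp : 0 < rpoch (1 + α) r := rpoch_pos (by linarith) r
    have hp1 : 0 < rpoch (1 + α) (r + 1) := rpoch_pos (by linarith) (r + 1)
    rw [Finset.sum_range_succ, Finset.sum_range_succ, Finset.sum_range_zero]
    simp only [Nat.choose_self, Nat.choose_zero_right, Nat.cast_one, pow_zero, pow_one,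
      zero_add, one_mul]
    have e1 : (1 : ℕ) + r = r + 1 := by ring
    rw [e1]
    have e2 : rpoch (1 + α) (r + 1) = rpoch (1 + α) r * (1 + α + r) := rpoch_succ _ _
    have e3 : ((r + 1).factorial : ℝ) = (r + 1) * (r.factorial : ℝ) := by
      rw [Nat.factorial_succ]; push_cast; ring
    rw [e2, e3]
    field_simp
    ring
  | succ m hm ih =>
    intro r
    rw [pascal_sum (fun j => ((j + r).factorial : ℝ) / rpoch (1 + α) (j + r)) m]
    simp only [show ∀ j : ℕ, j + 1 + r = j + (r + 1) from fun j => by omega]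
    rw [ih r, ih (r + 1)]
    have hma : (0 : ℝ) < (m : ℝ) + α := by
      have : (1 : ℝ) ≤ (m : ℝ) := by exact_mod_cast hm
      linarith
    have hB : rpoch ((m : ℝ) + α) (r + 2) = ((m : ℝ) + α) * rpoch ((m : ℝ) + α + 1) (r + 1) :=
      rpoch_succ' _ _
    have hC : rpoch ((m : ℝ) + α) (r + 1) = ((m : ℝ) + α) * rpoch ((m : ℝ) + α + 1) r :=
      rpoch_succ' _ _
    have hD : rpoch ((m : ℝ) + α + 1) (r + 1) = rpoch ((m : ℝ) + α + 1) r * ((m : ℝ) + α + 1 + r) :=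
      rpoch_succ _ _
    have hcast2 : (((m + 1 : ℕ) : ℝ)) + α = (m : ℝ) + α + 1 := by push_cast; ring
    have hr1 : ((r + 1).factorial : ℝ) = (r + 1) * (r.factorial : ℝ) := by
      rw [Nat.factorial_succ]; push_cast; ring
    rw [hcast2, hB, hD, hC, hr1]
    have hpr : 0 < rpoch ((m : ℝ) + α + 1) r := rpoch_pos (by linarith) r
    have h3 : (0 : ℝ) < (m : ℝ) + α + 1 + r := by positivity
    field_simp
    ring

lemma rpoch_one (z : ℝ) : rpoch z 1 = z := by simp [rpoch]

/-- For `Φ(n) = (1+α)_{n−1}/(n−1)!` with `0 ≤ α ≤ 1`, the identity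
`n(Φ(n)−Φ(n−1))/Φ(n) = n[1 − ∑_{k=2}^n C(n−1,k−1)(−1)^k/Φ(k)]` holds for all
`n ≥ 2` (the `(α,α)` structure has `P(first part = 1) = P(last part = 1)`). -/
theorem alphaAlpha_reversible (α : ℝ) (h0 : 0 ≤ α) (h1 : α ≤ 1) :
    ∀ n : ℕ, 2 ≤ n →
      (n : ℝ) * (PhiAA α n - PhiAA α (n - 1)) / PhiAA α n =
        (n : ℝ) * (1 - ∑ k ∈ Finset.Icc 2 n,
          ((n - 1).choose (k - 1) : ℝ) * (-1 : ℝ) ^ k / PhiAA α k) := by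
  intro n hn
  obtain ⟨m, rfl⟩ : ∃ m, n = m + 2 := ⟨n - 2, by omega⟩
  have hP : 0 < rpoch (1 + α) m := rpoch_pos (by linarith) m
  have hP1 : 0 < rpoch (1 + α) (m + 1) := rpoch_pos (by linarith) (m + 1)
  have hma : (0 : ℝ) < 1 + α + (m : ℝ) := by positivity
  have hΦn : PhiAA α (m + 2) = rpoch (1 + α) (m + 1) / ((m + 1).factorial : ℝ) := by
    simp [PhiAA]
  have hΦn1 : PhiAA α (m + 2 - 1) = rpoch (1 + α) m / (m.factorial : ℝ) := by
    simp [PhiAA]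
  -- LHS value
  have hrp : rpoch (1 + α) (m + 1) = rpoch (1 + α) m * (1 + α + m) := rpoch_succ _ _
  have hfac : ((m + 1).factorial : ℝ) = (m + 1) * (m.factorial : ℝ) := by
    rw [Nat.factorial_succ]; push_cast; ring
  have hL : ((m + 2 : ℕ) : ℝ) * (PhiAA α (m + 2) - PhiAA α (m + 2 - 1)) / PhiAA α (m + 2)
      = ((m + 2 : ℕ) : ℝ) * (α / (1 + α + m)) := by
    rw [hΦn, hΦn1, hrp, hfac]
    have hm0 : (0 : ℝ) < (m.factorial : ℝ) := by positivity
    have hm1 : (0 : ℝ) < (m : ℝ) + 1 := by positivity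
    field_simp
    ring
  rw [hL]
  -- RHS value
  have hS := key α h0 (m + 1) (by omega) 0
  simp only [add_zero, Nat.factorial_zero, Nat.cast_one, mul_one, rpoch_one] at hS
  rw [Finset.sum_range_succ'
    (fun j => (((m + 1).choose j : ℕ) : ℝ) * (-1) ^ j * ((j.factorial : ℝ) / rpoch (1 + α) j))
    (m + 1)] at hS
  simp only [Nat.choose_zero_right, Nat.cast_one, pow_zero, one_mul, Nat.factorial_zero,
    rpoch_zero, div_one] at hS
  -- convert Icc sum to range sum
  have hIcc : (∑ k ∈ Finset.Icc 2 (m + 2),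
        (((m + 2 - 1).choose (k - 1) : ℕ) : ℝ) * (-1 : ℝ) ^ k / PhiAA α k)
      = ∑ j ∈ Finset.range (m + 1),
        (((m + 1).choose (j + 1) : ℕ) : ℝ) * (-1 : ℝ) ^ j * (((j + 1).factorial : ℝ) / rpoch (1 + α) (j + 1)) := by
    rw [show Finset.Icc 2 (m + 2) = Finset.Ico 2 (m + 3) by rfl]
    rw [Finset.sum_Ico_eq_sum_range]
    have : m + 3 - 2 = m + 1 := by omega
    rw [this]
    apply Finset.sum_congr rfl
    intro j _
    have h2 : 2 + j - 1 = j + 1 := by omega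
    have h3 : m + 2 - 1 = m + 1 := by omega
    have h4 : PhiAA α (2 + j) = rpoch (1 + α) (j + 1) / ((j + 1).factorial : ℝ) := by
      simp [PhiAA, show 2 + j - 1 = j + 1 from by omega]
    rw [h2, h3, h4]
    have h5 : ((-1 : ℝ)) ^ (2 + j) = (-1 : ℝ) ^ j := by
      rw [pow_add]; norm_num
    rw [h5]
    have hz : rpoch (1 + α) (j + 1) ≠ 0 := (rpoch_pos (by linarith : (0:ℝ) < 1 + α) _).ne'
    have hfz : ((j + 1).factorial : ℝ) ≠ 0 := by positivity
    field_simp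
  rw [hIcc]
  simp only [zero_add, rpoch_one] at hS
  have hc : ((m + 1 : ℕ) : ℝ) + α = 1 + α + (m : ℝ) := by push_cast; ring
  rw [hc] at hS
  have hTeq : (∑ j ∈ Finset.range (m + 1),
        (((m + 1).choose (j + 1) : ℕ) : ℝ) * (-1 : ℝ) ^ j * (((j + 1).factorial : ℝ) / rpoch (1 + α) (j + 1)))
      = -(∑ j ∈ Finset.range (m + 1),
        (((m + 1).choose (j + 1) : ℕ) : ℝ) * (-1 : ℝ) ^ (j + 1) * (((j + 1).factorial : ℝ) / rpoch (1 + α) (j + 1))) := by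
    rw [← Finset.sum_neg_distrib]
    apply Finset.sum_congr rfl
    intro j _
    rw [pow_succ]
    ring
  rw [hTeq, sub_neg_eq_add, ← hS]
  ring
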